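/- Let g be a Lie algebra, t ∈ g⊗g symmetric and g-invariant, and let t^∨ : g* → g be the associated linear map. For λ ∈ g*, define t_n(λ) = (ad(t^∨(λ)) applied in the second tensor factor)^{2n-1}(t). Then t_n(λ) lies in the antisymmetric part ∧²(g) of g⊗g; more generally, (1⊗ad t^∨(λ))^k(t) lies in S²(g) if k is even and in ∧²(g) if k is odd. -/
import Mathlib


open TensorProduct

/- STATEMENT 2: For `t ∈ g⊗g` symmetric and `g`-invariant, and
`t^∨(λ) = (λ⊗id)(t)`, the tensor `(1 ⊗ ad t^∨(λ))^k (t)` lies in `S²(g)`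
(i.e. is fixed by the flip) if `k` is even, and in `∧²(g)` (i.e. is negated by
the flip) if `k` is odd; in particular `t_n(λ) = (1 ⊗ ad t^∨(λ))^{2n-1}(t)`
lies in `∧²(g)`. -/

variable (g : Type*) [LieRing g] [LieAlgebra ℂ g]

/-- `t^∨(λ) = (λ ⊗ id)(t)`. -/
noncomputable def tvee (t : g ⊗[ℂ] g) (lam : Module.Dual ℂ g) : g :=
  TensorProduct.lid ℂ g (TensorProduct.map lam LinearMap.id t)

/-- the operator `1 ⊗ ad x` on `g ⊗ g`. -/
noncomputable def oneAd (x : g) : g ⊗[ℂ] g →ₗ[ℂ] g ⊗[ℂ] g :=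
  LinearMap.lTensor g ((LieAlgebra.ad ℂ g x : Module.End ℂ g) : g →ₗ[ℂ] g)

private lemma comm_lTensor_aux (f : g →ₗ[ℂ] g) (z : g ⊗[ℂ] g) :
    TensorProduct.comm ℂ g g (LinearMap.lTensor g f z)
      = LinearMap.rTensor g f (TensorProduct.comm ℂ g g z) := by
  induction z using TensorProduct.induction_on with
  | zero => simp
  | tmul a b => simp
  | add x y hx hy => simp [hx, hy]

private lemma lr_comm_aux (f h : g →ₗ[ℂ] g) (z : g ⊗[ℂ] g) :
    LinearMap.rTensor g h (LinearMap.lTensor g f z)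
      = LinearMap.lTensor g f (LinearMap.rTensor g h z) := by
  induction z using TensorProduct.induction_on with
  | zero => simp
  | tmul a b => simp
  | add x y hx hy => simp [hx, hy]

theorem stmt_2 [FiniteDimensional ℂ g] (t : g ⊗[ℂ] g)
    (hsym : TensorProduct.comm ℂ g g t = t)
    (hinv : ∀ x : g,
      LinearMap.rTensor g ((LieAlgebra.ad ℂ g x : Module.End ℂ g) : g →ₗ[ℂ] g) t
        + LinearMap.lTensor g ((LieAlgebra.ad ℂ g x : Module.End ℂ g) : g →ₗ[ℂ] g) t = 0) :
    ∀ (lam : Module.Dual ℂ g) (k : ℕ),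
      (Even k → TensorProduct.comm ℂ g g ((oneAd g (tvee g t lam))^[k] t)
            = (oneAd g (tvee g t lam))^[k] t) ∧
      (Odd k → TensorProduct.comm ℂ g g ((oneAd g (tvee g t lam))^[k] t)
            = -((oneAd g (tvee g t lam))^[k] t)) ∧
      (∀ n : ℕ, 1 ≤ n →
        TensorProduct.comm ℂ g g ((oneAd g (tvee g t lam))^[2 * n - 1] t)
          = -((oneAd g (tvee g t lam))^[2 * n - 1] t)) := by
  intro lam
  set x := tvee g t lam with hx
  set f : g →ₗ[ℂ] g := ((LieAlgebra.ad ℂ g x : Module.End ℂ g) : g →ₗ[ℂ] g) with hf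
  have hRt : LinearMap.rTensor g f t = -LinearMap.lTensor g f t :=
    eq_neg_of_add_eq_zero_left (hinv x)
  have hLR : ∀ (k : ℕ),
      LinearMap.rTensor g f ((LinearMap.lTensor g f)^[k] t)
        = -((LinearMap.lTensor g f)^[k + 1] t) := by
    intro k
    induction k with
    | zero => simpa using hRt
    | succ k ih =>
      rw [Function.iterate_succ_apply', lr_comm_aux, ih]
      rw [Function.iterate_succ_apply' (LinearMap.lTensor g f) (k + 1)]
      simp
  have key : ∀ (k : ℕ),
      TensorProduct.comm ℂ g g ((oneAd g x)^[k] t)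
        = ((-1 : ℂ) ^ k) • ((oneAd g x)^[k] t) := by
    intro k
    induction k with
    | zero => simpa using hsym
    | succ k ih =>
      have hA : (oneAd g x : g ⊗[ℂ] g →ₗ[ℂ] g ⊗[ℂ] g) = LinearMap.lTensor g f := rfl
      rw [Function.iterate_succ_apply', hA, comm_lTensor_aux, ← hA, ih, map_smul, hA, hLR,
        ← Function.iterate_succ_apply' (LinearMap.lTensor g f) k t]
      rw [smul_neg, ← neg_smul, pow_succ, mul_comm, neg_mul, one_mul]
  intro k
  refine ⟨fun hk => ?_, fun hk => ?_, fun n hn => ?_⟩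
  · rw [key k, hk.neg_one_pow, one_smul]
  · rw [key k, hk.neg_one_pow, neg_one_smul]
  · have hodd : Odd (2 * n - 1) := ⟨n - 1, by omega⟩
    rw [key _, hodd.neg_one_pow, neg_one_smul]
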